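/- For j ∈ {0,1,2,3} let P_j⁰ = (p_j⁰, 0) ∈ ℝ² × {0} and P_j¹ = (p_j¹, 1) ∈ ℝ² × {1} be the vertices of two quadrilaterals in the parallel planes {z=0} and {z=1} of ℝ³, and for u ∈ [0,1] set P_j^u := (1−u)·P_j⁰ + u·P_j¹. Assume there is J > 0 such that for every u ∈ [0,1] and every j (indices mod 4), the 2-dimensional determinant of the xy-projections satisfies det(proj(P_{j+1}^u − P_j^u), proj(P_{j−1}^u − P_j^u)) ≥ J. Define, for each u, v^u(t) := (1−t)·(P₁^u−P₀^u) + t·(P₂^u−P₃^u), w^u(s) := (1−s)·(P₃^u−P₀^u) + s·(P₂^u−P₁^u), Q^u(s,t) := P₀^u + s·v^u(0) + t·w^u(s), and B(s,t,u) := Q^u(s,t) = (1−u)·Q⁰(s,t) + u·Q¹(s,t). Let D := diam(B([0,1]³)) (Euclidean diameter of the image). Then for all (s,t,u), (s',t',u') ∈ [0,1]³: |B(s',t',u') − B(s,t,u)| ≤ D·(|s'−s| + |t'−t| + |u'−u|) and |B(s',t',u') − B(s,t,u)| ≥ (J/D²)·max{|s'−s|, |t'−t|, |u'−u|}. In particular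 B is a bi-Lipschitz map from the unit cube onto its image. -/

import Mathlib

/-- The determinant of the xy-projections of two vectors in ℝ³:
`det(proj v, proj w) = v₁w₂ − v₂w₁`. -/
noncomputable def detxy (v w : EuclideanSpace ℝ (Fin 3)) : ℝ := v 0 * w 1 - v 1 * w 0

set_option maxHeartbeats 1000000

lemma detxy_def' (v w : EuclideanSpace ℝ (Fin 3)) : detxy v w = v 0 * w 1 - v 1 * w 0 := rfl

lemma detxy_sq_le' (v w : EuclideanSpace ℝ (Fin 3)) :
    (detxy v w)^2 ≤ (v 0^2 + v 1^2) * (w 0^2 + w 1^2) := by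
  rw [detxy_def']; nlinarith [sq_nonneg (v 0 * w 0 + v 1 * w 1)]

lemma myabs_le' {x y : ℝ} (h : x^2 ≤ y^2) (hy : 0 ≤ y) : |x| ≤ y := by
  rw [← Real.sqrt_sq_eq_abs]
  exact (Real.sqrt_le_sqrt h).trans (le_of_eq (Real.sqrt_sq hy))

lemma esp3_norm_sq' (x : EuclideanSpace ℝ (Fin 3)) : ‖x‖^2 = x 0^2 + x 1^2 + x 2^2 := by
  rw [EuclideanSpace.norm_eq, Real.sq_sqrt (by positivity)]
  simp [Fin.sum_univ_three, sq_abs]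

lemma aux_det_le' (v w : EuclideanSpace ℝ (Fin 3)) {a b : ℝ}
    (hv : v 0^2 + v 1^2 ≤ a^2) (hw : w 0^2 + w 1^2 ≤ b^2) (ha : 0 ≤ a) (hb : 0 ≤ b) :
    |detxy v w| ≤ a * b := by
  apply myabs_le' _ (mul_nonneg ha hb)
  nlinarith [detxy_sq_le' v w, sq_nonneg (v 0), sq_nonneg (v 1), sq_nonneg (w 0),
    sq_nonneg (w 1)]

lemma aux_convex' {J d0 d1 d2 d3 s t : ℝ} (hs0 : 0 ≤ s) (hs1 : s ≤ 1)
    (ht0 : 0 ≤ t) (ht1 : t ≤ 1)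
    (h0 : J ≤ d0) (h1 : J ≤ d1) (h2 : J ≤ d2) (h3 : J ≤ d3) :
    J ≤ (1 - t) * (1 - s) * d0 + (1 - t) * s * d1 + t * (1 - s) * d2 + t * s * d3 := by
  nlinarith [mul_nonneg (mul_nonneg (by linarith : (0:ℝ) ≤ 1 - t) (by linarith : (0:ℝ) ≤ 1 - s)) (by linarith : 0 ≤ d0 - J),
    mul_nonneg (mul_nonneg (by linarith : (0:ℝ) ≤ 1 - t) hs0) (by linarith : 0 ≤ d1 - J),
    mul_nonneg (mul_nonneg ht0 (by linarith : (0:ℝ) ≤ 1 - s)) (by linarith : 0 ≤ d2 - J),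
    mul_nonneg (mul_nonneg ht0 hs0) (by linarith : 0 ≤ d3 - J)]

lemma aux_one_le' {D : ℝ} (h : 1 ≤ D^2) (h0 : 0 ≤ D) : 1 ≤ D := by nlinarith

lemma aux_abs_le_of_sq {N p b : ℝ} (h : N^2 = p^2 + b^2) (hN : 0 ≤ N) : |b| ≤ N := by
  apply myabs_le' _ hN
  nlinarith [sq_nonneg p]

/-- The key lower-bound estimate, in clean real-number form. -/
lemma aux_lower' {J D a b dVW F N p e : ℝ}
    (hJpos : 0 < J) (hJd : J ≤ dVW)
    (hA : |a * dVW + b * F| ≤ p * D) (hF : |F| ≤ e * D)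
    (hp : 0 ≤ p) (he : 0 ≤ e) (hD : 0 ≤ D)
    (he2 : e^2 = D^2 - 1)
    (hN2 : N^2 = p^2 + b^2) (hN : 0 ≤ N) :
    J * |a| ≤ D^2 * N := by
  have hd0 : 0 ≤ dVW := hJpos.le.trans hJd
  have h2 : |a * dVW| ≤ p * D + |b| * (e * D) := by
    calc |a * dVW| = |(a * dVW + b * F) - b * F| := by ring_nf
      _ ≤ |a * dVW + b * F| + |b * F| := abs_sub _ _
      _ = |a * dVW + b * F| + |b| * |F| := by rw [abs_mul]
      _ ≤ p * D + |b| * (e * D) :=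
          add_le_add hA (mul_le_mul_of_nonneg_left hF (abs_nonneg b))
  have hCS : p + e * |b| ≤ D * N := by
    have hsq : (p + e * |b|)^2 ≤ (D * N)^2 := by
      nlinarith [sq_nonneg (e * p - |b|), sq_abs b, mul_nonneg he (abs_nonneg b)]
    have h' := myabs_le' hsq (mul_nonneg hD hN)
    rwa [abs_of_nonneg (by positivity)] at h'
  have h3 : p * D + |b| * (e * D) ≤ D^2 * N := by
    nlinarith [mul_le_mul_of_nonneg_left hCS hD]
  calc J * |a| ≤ dVW * |a| := mul_le_mul_of_nonneg_right hJd (abs_nonneg a)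
    _ = |a * dVW| := by rw [abs_mul, abs_of_nonneg hd0]; ring
    _ ≤ p * D + |b| * (e * D) := h2
    _ ≤ D^2 * N := h3

/-- Bi-Lipschitz parametrization of the region between two strictly convex
quadrilaterals lying in the parallel planes `{z = 0}` and `{z = 1}` of ℝ³.
With `Pᵘⱼ := (1−u)·P⁰ⱼ + u·P¹ⱼ`, assuming
`det(proj(Pᵘ_{j+1} − Pᵘⱼ), proj(Pᵘ_{j−1} − Pᵘⱼ)) ≥ J > 0` for all `u ∈ [0,1]`
and all `j` (mod 4), the map `B(s,t,u) := Qᵘ(s,t)` with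
`Qᵘ(s,t) = Pᵘ₀ + s·vᵘ(0) + t·wᵘ(s)` satisfies
`|B(s',t',u') − B(s,t,u)| ≤ D(|s'−s| + |t'−t| + |u'−u|)` and
`|B(s',t',u') − B(s,t,u)| ≥ (J/D²)·max(|s'−s|, |t'−t|, |u'−u|)`,
where `D` is the Euclidean diameter of the image `B([0,1]³)`. -/
theorem prism_param_biLipschitz (P0 P1 : Fin 4 → EuclideanSpace ℝ (Fin 3))
    (hP0 : ∀ j, P0 j 2 = 0) (hP1 : ∀ j, P1 j 2 = 1)
    (Pu : ℝ → Fin 4 → EuclideanSpace ℝ (Fin 3))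
    (hPu : ∀ (u : ℝ) (j : Fin 4), Pu u j = (1 - u) • P0 j + u • P1 j)
    (J : ℝ) (hJpos : 0 < J)
    (hJ : ∀ u ∈ Set.Icc (0 : ℝ) 1, ∀ j : Fin 4,
      J ≤ detxy (Pu u (j + 1) - Pu u j) (Pu u (j - 1) - Pu u j))
    (vu wu : ℝ → ℝ → EuclideanSpace ℝ (Fin 3))
    (hvu : ∀ u t : ℝ, vu u t = (1 - t) • (Pu u 1 - Pu u 0) + t • (Pu u 2 - Pu u 3))
    (hwu : ∀ u s : ℝ, wu u s = (1 - s) • (Pu u 3 - Pu u 0) + s • (Pu u 2 - Pu u 1))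
    (Qu : ℝ → ℝ → ℝ → EuclideanSpace ℝ (Fin 3))
    (hQu : ∀ u s t : ℝ, Qu u s t = Pu u 0 + s • vu u 0 + t • wu u s)
    (B : ℝ → ℝ → ℝ → EuclideanSpace ℝ (Fin 3))
    (hB : ∀ s t u : ℝ, B s t u = Qu u s t)
    (D : ℝ)
    (hD : D = Metric.diam {x : EuclideanSpace ℝ (Fin 3) |
      ∃ s ∈ Set.Icc (0 : ℝ) 1, ∃ t ∈ Set.Icc (0 : ℝ) 1, ∃ u ∈ Set.Icc (0 : ℝ) 1,
        x = B s t u}) :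
    ∀ s ∈ Set.Icc (0 : ℝ) 1, ∀ t ∈ Set.Icc (0 : ℝ) 1, ∀ u ∈ Set.Icc (0 : ℝ) 1,
      ∀ s' ∈ Set.Icc (0 : ℝ) 1, ∀ t' ∈ Set.Icc (0 : ℝ) 1, ∀ u' ∈ Set.Icc (0 : ℝ) 1,
        ‖B s' t' u' - B s t u‖ ≤ D * (|s' - s| + |t' - t| + |u' - u|) ∧
        (J / D ^ 2) * max (max |s' - s| |t' - t|) |u' - u| ≤ ‖B s' t' u' - B s t u‖ := by
  -- closed forms for B
  have hBvec : ∀ a b c : ℝ, B a b c = Pu c 0 + a • (Pu c 1 - Pu c 0) +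
      b • ((1 - a) • (Pu c 3 - Pu c 0) + a • (Pu c 2 - Pu c 1)) := by
    intro a b c
    rw [hB, hQu, hvu, hwu]
    module
  have hPuco : ∀ (c : ℝ) (j : Fin 4) (i : Fin 3),
      Pu c j i = (1 - c) * P0 j i + c * P1 j i := by
    intro c j i
    rw [hPu]
    simp [PiLp.add_apply, PiLp.smul_apply]
  have hBco : ∀ (a b c : ℝ) (i : Fin 3), B a b c i =
      Pu c 0 i + a * (Pu c 1 i - Pu c 0 i) +
      b * ((1 - a) * (Pu c 3 i - Pu c 0 i) + a * (Pu c 2 i - Pu c 1 i)) := by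
    intro a b c i
    rw [hBvec]
    simp only [PiLp.add_apply, PiLp.smul_apply, PiLp.sub_apply, smul_eq_mul]
    try ring
  have hz : ∀ a b c : ℝ, B a b c 2 = c := by
    intro a b c
    simp only [hBco, hPuco, hP0, hP1]
    ring
  -- the image set, membership and diameter bound
  set S : Set (EuclideanSpace ℝ (Fin 3)) := {x : EuclideanSpace ℝ (Fin 3) |
      ∃ s ∈ Set.Icc (0 : ℝ) 1, ∃ t ∈ Set.Icc (0 : ℝ) 1, ∃ u ∈ Set.Icc (0 : ℝ) 1,
        x = B s t u} with hSdef
  have hmem : ∀ a ∈ Set.Icc (0:ℝ) 1, ∀ b ∈ Set.Icc (0:ℝ) 1, ∀ c ∈ Set.Icc (0:ℝ) 1,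
      B a b c ∈ S := by
    intro a ha b hb c hc
    exact ⟨a, ha, b, hb, c, hc, rfl⟩
  have hcont : Continuous (fun p : ℝ × ℝ × ℝ => B p.1 p.2.1 p.2.2) := by
    simp only [hBvec, hPu]
    fun_prop
  have hSeq : S = (fun p : ℝ × ℝ × ℝ => B p.1 p.2.1 p.2.2) ''
      (Set.Icc 0 1 ×ˢ Set.Icc 0 1 ×ˢ Set.Icc 0 1) := by
    ext x
    constructor
    · rintro ⟨a, ha, b, hb, c, hc, rfl⟩
      exact ⟨(a, b, c), ⟨ha, hb, hc⟩, rfl⟩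
    · rintro ⟨⟨a, b, c⟩, ⟨ha, hb, hc⟩, rfl⟩
      exact ⟨a, ha, b, hb, c, hc, rfl⟩
  have hbdd : Bornology.IsBounded S := by
    rw [hSeq]
    exact ((isCompact_Icc.prod (isCompact_Icc.prod isCompact_Icc)).image hcont).isBounded
  have hdiam : ∀ a ∈ Set.Icc (0:ℝ) 1, ∀ b ∈ Set.Icc (0:ℝ) 1, ∀ c ∈ Set.Icc (0:ℝ) 1,
      ∀ a' ∈ Set.Icc (0:ℝ) 1, ∀ b' ∈ Set.Icc (0:ℝ) 1, ∀ c' ∈ Set.Icc (0:ℝ) 1,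
      ‖B a b c - B a' b' c'‖ ≤ D := by
    intro a ha b hb c hc a' ha' b' hb' c' hc'
    rw [hD, ← dist_eq_norm]
    exact Metric.dist_le_diam_of_mem hbdd (hmem a ha b hb c hc) (hmem a' ha' b' hb' c' hc')
  have hD0 : (0:ℝ) ≤ D := hD ▸ Metric.diam_nonneg
  -- the main argument
  intro s hs t ht u hu s' hs' t' ht' u' hu'
  have h01 : (0:ℝ) ∈ Set.Icc (0:ℝ) 1 := ⟨le_refl 0, zero_le_one⟩
  have h11 : (1:ℝ) ∈ Set.Icc (0:ℝ) 1 := ⟨zero_le_one, le_refl 1⟩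
  set V := B 1 t' u' - B 0 t' u' with hVdef
  set W := B s 1 u' - B s 0 u' with hWdef
  set E := B s t 1 - B s t 0 with hEdef
  set Δ := B s' t' u' - B s t u with hΔdef
  -- coordinate decomposition
  have hdecomp : ∀ i : Fin 3, Δ i = (s' - s) * V i + (t' - t) * W i + (u' - u) * E i := by
    intro i
    rw [hΔdef, hVdef, hWdef, hEdef]
    simp only [PiLp.sub_apply, hBco, hPuco]
    ring
  have hvecdecomp : Δ = (s' - s) • V + (t' - t) • W + (u' - u) • E := by
    ext i
    rw [hdecomp i]
    simp [PiLp.add_apply, PiLp.smul_apply]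
  -- z-coordinates
  have hV2 : V 2 = 0 := by rw [hVdef]; simp [PiLp.sub_apply, hz]
  have hW2 : W 2 = 0 := by rw [hWdef]; simp [PiLp.sub_apply, hz]
  have hE2 : E 2 = 1 := by rw [hEdef]; simp [PiLp.sub_apply, hz]
  have hΔ2 : Δ 2 = u' - u := by rw [hΔdef]; simp [PiLp.sub_apply, hz]
  -- norm bounds from the diameter
  have hVD : ‖V‖ ≤ D := hdiam 1 h11 t' ht' u' hu' 0 h01 t' ht' u' hu'
  have hWD : ‖W‖ ≤ D := hdiam s hs 1 h11 u' hu' s hs 0 h01 u' hu'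
  have hED : ‖E‖ ≤ D := hdiam s hs t ht 1 h11 s hs t ht 0 h01
  have hVproj : V 0^2 + V 1^2 ≤ D^2 := by
    have h1 := esp3_norm_sq' V
    have h2 : ‖V‖^2 ≤ D^2 := pow_le_pow_left₀ (norm_nonneg V) hVD 2
    rw [hV2] at h1
    linarith only [h1, h2]
  have hWproj : W 0^2 + W 1^2 ≤ D^2 := by
    have h1 := esp3_norm_sq' W
    have h2 : ‖W‖^2 ≤ D^2 := pow_le_pow_left₀ (norm_nonneg W) hWD 2
    rw [hW2] at h1
    linarith only [h1, h2]
  have hEproj : E 0^2 + E 1^2 ≤ D^2 - 1 := by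
    have h1 := esp3_norm_sq' E
    have h2 : ‖E‖^2 ≤ D^2 := pow_le_pow_left₀ (norm_nonneg E) hED 2
    rw [hE2] at h1
    linarith only [h1, h2]
  have hD2ge : (1:ℝ) ≤ D^2 := by
    linarith only [hEproj, sq_nonneg (E 0), sq_nonneg (E 1)]
  have hD1 : (1:ℝ) ≤ D := aux_one_le' hD2ge hD0
  -- the determinant lower bound for V, W
  have hJ0 : J ≤ detxy (Pu u' 1 - Pu u' 0) (Pu u' 3 - Pu u' 0) := hJ u' hu' 0
  have hJ1 : J ≤ detxy (Pu u' 2 - Pu u' 1) (Pu u' 0 - Pu u' 1) := hJ u' hu' 1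
  have hJ2 : J ≤ detxy (Pu u' 3 - Pu u' 2) (Pu u' 1 - Pu u' 2) := hJ u' hu' 2
  have hJ3 : J ≤ detxy (Pu u' 0 - Pu u' 3) (Pu u' 2 - Pu u' 3) := hJ u' hu' 3
  have hdVW : detxy V W =
      (1 - t') * (1 - s) * detxy (Pu u' 1 - Pu u' 0) (Pu u' 3 - Pu u' 0)
      + (1 - t') * s * detxy (Pu u' 2 - Pu u' 1) (Pu u' 0 - Pu u' 1)
      + t' * (1 - s) * detxy (Pu u' 0 - Pu u' 3) (Pu u' 2 - Pu u' 3)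
      + t' * s * detxy (Pu u' 3 - Pu u' 2) (Pu u' 1 - Pu u' 2) := by
    rw [hVdef, hWdef]
    simp only [detxy_def', PiLp.sub_apply, hBco]
    ring
  have hJVW : J ≤ detxy V W := by
    rw [hdVW]
    exact aux_convex' hs.1 hs.2 ht'.1 ht'.2 hJ0 hJ1 hJ3 hJ2
  -- J ≤ D² and D > 0
  have hJD2 : J ≤ D^2 := by
    have h1 := aux_det_le' V W hVproj hWproj hD0 hD0
    have h2 := (le_abs_self (detxy V W)).trans h1
    have h3 := hJVW.trans h2
    linarith only [h3]
  have hDpos : (0:ℝ) < D := lt_of_lt_of_le zero_lt_one hD1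
  -- upper Lipschitz bound
  have hup : ‖Δ‖ ≤ D * (|s' - s| + |t' - t| + |u' - u|) := by
    rw [hvecdecomp]
    have h1 : ‖(s' - s) • V + (t' - t) • W + (u' - u) • E‖ ≤
        ‖(s' - s) • V‖ + ‖(t' - t) • W‖ + ‖(u' - u) • E‖ := norm_add₃_le
    rw [norm_smul, norm_smul, norm_smul, Real.norm_eq_abs, Real.norm_eq_abs,
      Real.norm_eq_abs] at h1
    have b1 : |s' - s| * ‖V‖ ≤ |s' - s| * D := mul_le_mul_of_nonneg_left hVD (abs_nonneg _)
    have b2 : |t' - t| * ‖W‖ ≤ |t' - t| * D := mul_le_mul_of_nonneg_left hWD (abs_nonneg _)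
    have b3 : |u' - u| * ‖E‖ ≤ |u' - u| * D := mul_le_mul_of_nonneg_left hED (abs_nonneg _)
    linarith only [h1, b1, b2, b3]
  -- lower bound machinery
  set p := Real.sqrt (Δ 0^2 + Δ 1^2) with hpdef
  have hp0 : 0 ≤ p := Real.sqrt_nonneg _
  have hp2 : p^2 = Δ 0^2 + Δ 1^2 := Real.sq_sqrt (by positivity)
  set e := Real.sqrt (D^2 - 1) with hedef
  have he0 : 0 ≤ e := Real.sqrt_nonneg _
  have he2 : e^2 = D^2 - 1 := Real.sq_sqrt (by linarith only [hD2ge])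
  have hN2 : ‖Δ‖^2 = p^2 + (u' - u)^2 := by
    rw [esp3_norm_sq', hΔ2, hp2]
  have hN0 : 0 ≤ ‖Δ‖ := norm_nonneg _
  have habsu : |u' - u| ≤ ‖Δ‖ := aux_abs_le_of_sq hN2 hN0
  -- determinant bounds
  have hEe : E 0^2 + E 1^2 ≤ e^2 := by rw [he2]; exact hEproj
  have hAW : |detxy Δ W| ≤ p * D := aux_det_le' Δ W hp2.ge hWproj hp0 hD0
  have hVA : |detxy V Δ| ≤ p * D := by
    have := aux_det_le' V Δ hVproj hp2.ge hD0 hp0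
    rwa [mul_comm] at this
  have hEW : |detxy E W| ≤ e * D := aux_det_le' E W hEe hWproj he0 hD0
  have hVE : |detxy V E| ≤ e * D := by
    have := aux_det_le' V E hVproj hEe hD0 he0
    rwa [mul_comm] at this
  -- determinant decomposition identities
  have idA : detxy Δ W = (s' - s) * detxy V W + (u' - u) * detxy E W := by
    simp only [detxy_def']
    rw [hdecomp 0, hdecomp 1]
    ring
  have idB : detxy V Δ = (t' - t) * detxy V W + (u' - u) * detxy V E := by
    simp only [detxy_def']
    rw [hdecomp 0, hdecomp 1]
    ring
  -- the three lower bounds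
  have hslow : J * |s' - s| ≤ D^2 * ‖Δ‖ := by
    refine aux_lower' hJpos hJVW ?_ hEW hp0 he0 hD0 he2 hN2 hN0
    rw [← idA]
    exact hAW
  have htlow : J * |t' - t| ≤ D^2 * ‖Δ‖ := by
    refine aux_lower' hJpos hJVW ?_ hVE hp0 he0 hD0 he2 hN2 hN0
    rw [← idB]
    exact hVA
  have hulow : J * |u' - u| ≤ D^2 * ‖Δ‖ := by
    calc J * |u' - u| ≤ D^2 * |u' - u| :=
          mul_le_mul_of_nonneg_right hJD2 (abs_nonneg _)
      _ ≤ D^2 * ‖Δ‖ := mul_le_mul_of_nonneg_left habsu (by positivity)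
  refine ⟨hup, ?_⟩
  have hc : (0:ℝ) ≤ J / D^2 := by positivity
  rw [mul_max_of_nonneg _ _ hc, mul_max_of_nonneg _ _ hc]
  have hconv : ∀ x : ℝ, J * x ≤ D^2 * ‖Δ‖ → J / D^2 * x ≤ ‖Δ‖ := by
    intro x hx
    rw [div_mul_eq_mul_div, div_le_iff₀ (by positivity)]
    linarith only [hx]
  exact max_le (max_le (hconv _ hslow) (hconv _ htlow)) (hconv _ hulow)
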